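/- Every finitely generated nilpotent group of orientation-preserving homeomorphisms of the real line ℝ preserves a nonzero Borel measure on ℝ that is finite on compact sets. -/

import Mathlib

set_option linter.unusedSectionVars false
set_option maxHeartbeats 1000000

open MeasureTheory

namespace PlanteAux

open scoped commutatorElement

abbrev lowerCentralSeries (G : Type*) [Group G] (n : ℕ) : Subgroup G :=
  (⊤ : Subgroup G).lowerCentralSeries n

theorem lowerCentralSeries_zero {G : Type*} [Group G] : lowerCentralSeries G 0 = ⊤ := rfl

theorem mem_lowerCentralSeries_succ_iff {G : Type*} [Group G] (n : ℕ) (q : G) :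
    q ∈ lowerCentralSeries G (n + 1) ↔
    q ∈ Subgroup.closure {x | ∃ p ∈ lowerCentralSeries G n, ∃ q ∈ (⊤ : Subgroup G),
      p * q * p⁻¹ * q⁻¹ = x} := Iff.rfl

theorem lowerCentralSeries_antitone {G : Type*} [Group G] : Antitone (lowerCentralSeries G) :=
  Subgroup.lowerCentralSeries_antitone _

theorem nilpotent_iff_lowerCentralSeries {G : Type*} [Group G] :
    Group.IsNilpotent G ↔ ∃ n, lowerCentralSeries G n = ⊥ :=
  Subgroup.nilpotent_iff_lowerCentralSeries

section QM

variable {G : Type*} [Group G]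

/-- `IsHQM φ Dd`: `φ` is a quasimorphism with defect `Dd`, homogeneous on ℕ-powers. -/
def IsHQM (φ : G → ℝ) (Dd : ℝ) : Prop :=
  (∀ x y : G, |φ (x * y) - φ x - φ y| ≤ Dd) ∧ (∀ (x : G) (n : ℕ), φ (x ^ n) = n * φ x)

theorem IsHQM.one_eq {φ : G → ℝ} {Dd : ℝ} (h : IsHQM φ Dd) : φ 1 = 0 := by
  have := h.2 1 0; simpa using this

/-- if `n * |a - b| ≤ C` for all positive natural `n` then `a = b`. -/
theorem eq_of_abs_sub_le_div {a b C : ℝ} (h : ∀ n : ℕ, 0 < n → (n : ℝ) * |a - b| ≤ C) :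
    a = b := by
  by_contra hne
  have hpos : 0 < |a - b| := abs_pos.mpr (sub_ne_zero.mpr hne)
  obtain ⟨n, hn⟩ := exists_nat_gt (C / |a - b|)
  have h1 := h (n + 1) (Nat.succ_pos n)
  have h2 : C / |a - b| < ((n : ℝ) + 1) := hn.trans (by linarith)
  rw [div_lt_iff₀ hpos] at h2
  push_cast at h1
  linarith

theorem IsHQM.conj {φ : G → ℝ} {Dd : ℝ} (h : IsHQM φ Dd) (x y : G) :
    φ (y * x * y⁻¹) = φ x := by
  apply eq_of_abs_sub_le_div (C := 2 * Dd + |φ y + φ y⁻¹|)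
  intro n hn
  have hpow : (y * x * y⁻¹) ^ n = y * x ^ n * y⁻¹ := conj_pow
  have h1 := h.1 y (x ^ n * y⁻¹)
  have h2 := h.1 (x ^ n) y⁻¹
  have e1 : φ (y * x ^ n * y⁻¹) = (n : ℝ) * φ (y * x * y⁻¹) := by
    rw [← hpow]; exact h.2 _ n
  have e2 : φ (x ^ n) = (n : ℝ) * φ x := h.2 _ n
  rw [show y * (x ^ n * y⁻¹) = y * x ^ n * y⁻¹ by group] at h1
  have key : (n : ℝ) * (φ (y * x * y⁻¹) - φ x)
      = (φ (y * x ^ n * y⁻¹) - φ y - φ (x ^ n * y⁻¹))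
        + (φ (x ^ n * y⁻¹) - φ (x ^ n) - φ y⁻¹) + (φ y + φ y⁻¹) := by
    rw [e1, e2]; ring
  calc (n : ℝ) * |φ (y * x * y⁻¹) - φ x| = |(n : ℝ) * (φ (y * x * y⁻¹) - φ x)| := by
        rw [abs_mul, Nat.abs_cast]
    _ ≤ Dd + Dd + |φ y + φ y⁻¹| := by
        rw [key]; exact (abs_add_three _ _ _).trans (by gcongr)
    _ = 2 * Dd + |φ y + φ y⁻¹| := by ring

theorem IsHQM.commute_add {φ : G → ℝ} {Dd : ℝ} (h : IsHQM φ Dd) {x y : G}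
    (hxy : Commute x y) : φ (x * y) = φ x + φ y := by
  have : φ (x * y) - (φ x + φ y) = φ (x*y) - φ x - φ y := by ring
  have key : ∀ n : ℕ, 0 < n → (n : ℝ) * |φ (x * y) - (φ x + φ y)| ≤ Dd := by
    intro n hn
    have hpow : (x * y) ^ n = x ^ n * y ^ n := hxy.mul_pow n
    have h1 := h.1 (x ^ n) (y ^ n)
    have e0 : φ ((x*y) ^ n) = (n : ℝ) * φ (x*y) := h.2 _ n
    have e1 : φ (x ^ n) = (n : ℝ) * φ x := h.2 _ n
    have e2 : φ (y ^ n) = (n : ℝ) * φ y := h.2 _ n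
    rw [hpow] at e0
    have key2 : (n : ℝ) * (φ (x * y) - (φ x + φ y))
        = (φ (x ^ n * y ^ n) - φ (x ^ n) - φ (y ^ n)) := by
      rw [e0, e1, e2]; ring
    calc (n : ℝ) * |φ (x * y) - (φ x + φ y)| = |(n : ℝ) * (φ (x * y) - (φ x + φ y))| := by
          rw [abs_mul, Nat.abs_cast]
      _ ≤ Dd := by rw [key2]; exact h1
  exact eq_of_abs_sub_le_div key

theorem IsHQM.inv_eq {φ : G → ℝ} {Dd : ℝ} (h : IsHQM φ Dd) (x : G) :
    φ x⁻¹ = - φ x := by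
  have := h.commute_add (Commute.inv_right (Commute.refl x))
  rw [mul_inv_cancel] at this
  rw [h.one_eq] at this
  linarith

/-- A commutator `⁅a, b⁆` which commutes with `b` has `φ ⁅a,b⁆ = 0`. -/
theorem IsHQM.commutator_eq_zero {φ : G → ℝ} {Dd : ℝ} (h : IsHQM φ Dd) {a b : G}
    (hc : Commute ⁅a, b⁆ b) : φ ⁅a, b⁆ = 0 := by
  have key : ∀ n : ℕ, ⁅a, b⁆ ^ n = a * b ^ n * a⁻¹ * (b ^ n)⁻¹ := by
    intro n
    have h1 : a * b * a⁻¹ = ⁅a, b⁆ * b := by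
      rw [commutatorElement_def]; group
    have h2 : a * b ^ n * a⁻¹ = (a * b * a⁻¹) ^ n := by rw [conj_pow]
    rw [h2, h1, hc.mul_pow]
    group
  have key2 : ∀ n : ℕ, 0 < n → (n : ℝ) * |φ ⁅a, b⁆ - 0| ≤ Dd := by
    intro n hn
    have e0 : φ (⁅a, b⁆ ^ n) = (n : ℝ) * φ ⁅a, b⁆ := h.2 _ n
    rw [key n] at e0
    have h1 := h.1 (a * b ^ n * a⁻¹) ((b ^ n)⁻¹)
    have e1 : φ (a * b ^ n * a⁻¹) = φ (b ^ n) := h.conj _ _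
    have e2 : φ ((b ^ n)⁻¹) = - φ (b ^ n) := h.inv_eq _
    rw [e0, e1, e2] at h1
    calc (n : ℝ) * |φ ⁅a, b⁆ - 0| = |(n : ℝ) * φ ⁅a, b⁆ - φ (b ^ n) - - φ (b ^ n)| := by
          rw [sub_zero, show ((n : ℝ) * φ ⁅a, b⁆ - φ (b ^ n) - - φ (b ^ n)) = (n:ℝ) * φ ⁅a,b⁆ by ring,
            abs_mul, Nat.abs_cast]
      _ ≤ Dd := h1
  have := eq_of_abs_sub_le_div key2
  linarith [this]

/-- The image of the lower central series under a surjective hom. -/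
theorem lcs_map_surjective {G' : Type*} [Group G'] (f : G →* G') (hf : Function.Surjective f) :
    ∀ n, (lowerCentralSeries G n).map f = lowerCentralSeries G' n := by
  intro n
  induction n with
  | zero =>
      simp only [lowerCentralSeries_zero]
      exact Subgroup.map_top_of_surjective f hf
  | succ n ih =>
      show Subgroup.map f ⁅lowerCentralSeries G n, ⊤⁆ = ⁅lowerCentralSeries G' n, ⊤⁆
      rw [Subgroup.map_commutator, ih, Subgroup.map_top_of_surjective f hf]

/-- Main theorem: a homogeneous quasimorphism on a group whose lower central series
reaches ⊥ is additive. -/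
theorem IsHQM.additive : ∀ (n : ℕ) {G : Type*} [Group G] (φ : G → ℝ) (Dd : ℝ),
    IsHQM φ Dd → lowerCentralSeries G n = ⊥ → ∀ x y : G, φ (x * y) = φ x + φ y := by
  intro n
  induction n with
  | zero =>
      intro G _ φ Dd h hbot x y
      have hx : x = 1 := by
        have : x ∈ lowerCentralSeries G 0 := by simp [lowerCentralSeries_zero]
        rw [hbot] at this
        simpa using this
      have hy : y = 1 := by
        have : y ∈ lowerCentralSeries G 0 := by simp [lowerCentralSeries_zero]
        rw [hbot] at this
        simpa using this
      rw [hx, hy, one_mul, h.one_eq]; ring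
  | succ n ih =>
      intro G _ φ Dd h hbot x y
      rcases Nat.eq_zero_or_pos n with hn0 | hnpos
      · -- G is abelian
        subst hn0
        have : ∀ a b : G, Commute a b := by
          intro a b
          rw [← commutatorElement_eq_one_iff_commute]
          have : ⁅a, b⁆ ∈ lowerCentralSeries G 1 :=
            Subgroup.commutator_mem_commutator (by simp [lowerCentralSeries_zero])
              (Subgroup.mem_top b)
          rw [hbot] at this; simpa using this
        exact h.commute_add (this x y)
      · -- main case: N := γ_n is central, φ vanishes on N, descend to G ⧸ N
        set N := lowerCentralSeries G n with hNdef
        have hcentral : ∀ z ∈ N, ∀ g : G, Commute z g := by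
          intro z hz g
          rw [← commutatorElement_eq_one_iff_commute]
          have : ⁅z, g⁆ ∈ lowerCentralSeries G (n + 1) :=
            Subgroup.commutator_mem_commutator hz (Subgroup.mem_top g)
          rw [hbot] at this; simpa using this
        -- φ vanishes on N
        have hvanish : ∀ z ∈ N, φ z = 0 := by
          obtain ⟨m, rfl⟩ : ∃ m, n = m + 1 := ⟨n - 1, (Nat.succ_pred_eq_of_pos hnpos).symm⟩
          suffices hsuff : ∀ z ∈ Subgroup.closure {x : G | ∃ p ∈ lowerCentralSeries G m, ∃ q ∈ (⊤ : Subgroup G), p * q * p⁻¹ * q⁻¹ = x}, φ z = 0 by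
            intro z hz
            exact hsuff z ((mem_lowerCentralSeries_succ_iff m z).mp hz)
          intro z hz'
          induction hz' using Subgroup.closure_induction with
          | mem w hw =>
              obtain ⟨p, hp, q, -, rfl⟩ := hw
              have : p * q * p⁻¹ * q⁻¹ = ⁅p, q⁆ := (commutatorElement_def p q).symm
              rw [this]
              refine h.commutator_eq_zero ?_
              refine hcentral _ ?_ q
              exact Subgroup.commutator_mem_commutator hp (Subgroup.mem_top q)
          | one => exact h.one_eq
          | mul w₁ w₂ hw₁ hw₂ pw₁ pw₂ =>
              have hmem₁ : w₁ ∈ N := by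
                rw [hNdef]; exact (mem_lowerCentralSeries_succ_iff m w₁).mpr hw₁
              have : φ (w₁ * w₂) = φ w₁ + φ w₂ := h.commute_add (hcentral _ hmem₁ w₂)
              rw [this, pw₁, pw₂]; ring
          | inv w hw pw => rw [h.inv_eq, pw]; ring
        -- φ is constant on cosets of N
        have hconst : ∀ (a : G), ∀ z ∈ N, φ (a * z) = φ a := by
          intro a z hz
          rw [h.commute_add ((hcentral z hz a).symm), hvanish z hz]; ring
        -- descend to quotient
        let Q := G ⧸ N
        have hNnormal : N.Normal := by infer_instance
        let ψ : Q → ℝ := fun q => φ q.out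
        have hψ : ∀ a : G, ψ (QuotientGroup.mk a) = φ a := by
          intro a
          show φ (QuotientGroup.mk a : Q).out = φ a
          obtain ⟨z, hz⟩ := QuotientGroup.mk_out_eq_mul N a
          rw [hz]
          exact hconst a z z.2
        have hψHQM : IsHQM ψ Dd := by
          constructor
          · intro q r
            obtain ⟨a, rfl⟩ := QuotientGroup.mk_surjective q
            obtain ⟨b, rfl⟩ := QuotientGroup.mk_surjective r
            rw [show (QuotientGroup.mk a : Q) * QuotientGroup.mk b = QuotientGroup.mk (a * b) from rfl,
              hψ, hψ, hψ]
            exact h.1 a b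
          · intro q m
            obtain ⟨a, rfl⟩ := QuotientGroup.mk_surjective q
            rw [show (QuotientGroup.mk a : Q) ^ m = QuotientGroup.mk (a ^ m) from rfl, hψ, hψ]
            exact h.2 a m
        have hQbot : lowerCentralSeries Q n = ⊥ := by
          rw [← lcs_map_surjective (QuotientGroup.mk' N) (QuotientGroup.mk'_surjective N) n]
          rw [Subgroup.map_eq_bot_iff, QuotientGroup.ker_mk']
        have := ih ψ Dd hψHQM hQbot (QuotientGroup.mk x) (QuotientGroup.mk y)
        rw [show (QuotientGroup.mk x : Q) * QuotientGroup.mk y = QuotientGroup.mk (x * y) from rfl,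
          hψ, hψ, hψ] at this
        exact this

end QM

/-! ### Generation of the lower central series by iterated commutators -/

section Gen

variable {G : Type*} [Group G]

/-- Iterated left-normed commutators of elements of `S`. -/
def commSet (S : Set G) : ℕ → Set G
  | 0 => S
  | k + 1 => Set.image2 (fun a b => ⁅a, b⁆) (commSet S k) S

theorem commSet_finite {S : Set G} (hS : S.Finite) (k : ℕ) : (commSet S k).Finite := by
  induction k with
  | zero => exact hS
  | succ k ih => exact Set.Finite.image2 _ ih hS

theorem commSet_subset_lcs {S : Set G} (k : ℕ) :
    commSet S k ⊆ (lowerCentralSeries G k : Set G) := by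
  induction k with
  | zero => intro x _; exact Subgroup.mem_top x
  | succ k ih =>
      rintro x ⟨a, ha, b, hb, rfl⟩
      exact Subgroup.commutator_mem_commutator (ih ha) (Subgroup.mem_top b)

theorem lcs_le_closure_commSet {S : Set G} (hS : Subgroup.closure S = ⊤) (k : ℕ) :
    lowerCentralSeries G k ≤
      Subgroup.closure (commSet S k ∪ (lowerCentralSeries G (k + 1) : Set G)) := by
  induction k with
  | zero =>
      rw [show commSet S 0 = S from rfl]
      calc (lowerCentralSeries G 0) = Subgroup.closure S := by rw [hS]; rfl
        _ ≤ _ := Subgroup.closure_mono Set.subset_union_left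
  | succ k ih =>
      set M := Subgroup.closure (commSet S (k + 1) ∪ (lowerCentralSeries G (k + 2) : Set G))
        with hM
      have hMsub : (lowerCentralSeries G (k + 2) : Set G) ⊆ (M : Set G) := fun z hz =>
        Subgroup.subset_closure (Or.inr hz)
      have hcl : Subgroup.closure (commSet S k ∪ (lowerCentralSeries G (k + 1) : Set G))
          ≤ lowerCentralSeries G k := by
        rw [Subgroup.closure_le]
        apply Set.union_subset
        · exact commSet_subset_lcs k
        · exact fun z hz => lowerCentralSeries_antitone (Nat.le_succ k) hz
      -- key claim
      have claimA : ∀ a, a ∈ Subgroup.closure (commSet S k ∪ (lowerCentralSeries G (k + 1) : Set G)) →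
          ∀ b : G, ⁅a, b⁆ ∈ M := by
        intro a ha
        induction ha using Subgroup.closure_induction with
        | mem x hx =>
            rcases hx with hx | hx
            · -- x ∈ commSet S k; induct over b ∈ closure S = ⊤
              have hxk : x ∈ lowerCentralSeries G k := commSet_subset_lcs k hx
              intro b
              have hb : b ∈ Subgroup.closure S := by rw [hS]; exact Subgroup.mem_top b
              induction hb using Subgroup.closure_induction with
              | mem y hy =>
                  exact Subgroup.subset_closure (Or.inl ⟨x, hx, y, hy, rfl⟩)
              | one => simpa using (M.one_mem)
              | mul y z hy hz py pz =>
                  have hu : ⁅x, z⁆ ∈ lowerCentralSeries G (k + 1) :=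
                    Subgroup.commutator_mem_commutator hxk (Subgroup.mem_top z)
                  have hcor : ⁅⁅x, z⁆⁻¹, y⁆ ∈ lowerCentralSeries G (k + 2) :=
                    Subgroup.commutator_mem_commutator ((lowerCentralSeries G (k+1)).inv_mem hu)
                      (Subgroup.mem_top y)
                  have hid : ⁅x, y * z⁆ = ⁅x, y⁆ * (⁅x, z⁆ * ⁅⁅x, z⁆⁻¹, y⁆) := by
                    simp only [commutatorElement_def]; group
                  rw [hid]
                  exact M.mul_mem py (M.mul_mem pz (hMsub hcor))
              | inv y hy py =>
                  have hu : ⁅x, y⁆ ∈ lowerCentralSeries G (k + 1) :=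
                    Subgroup.commutator_mem_commutator hxk (Subgroup.mem_top y)
                  have hcor : ⁅⁅x, y⁆, y⁻¹⁆ ∈ lowerCentralSeries G (k + 2) :=
                    Subgroup.commutator_mem_commutator hu (Subgroup.mem_top _)
                  have hid : ⁅x, y⁻¹⁆ = ⁅x, y⁆⁻¹ * ⁅⁅x, y⁆, y⁻¹⁆ := by
                    simp only [commutatorElement_def]; group
                  rw [hid]
                  exact M.mul_mem (M.inv_mem py) (hMsub hcor)
            · -- x ∈ γ_{k+1} : ⁅x,b⁆ ∈ γ_{k+2}
              intro b
              exact hMsub (Subgroup.commutator_mem_commutator hx (Subgroup.mem_top b))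
        | one =>
            intro b
            simpa using M.one_mem
        | mul x y hx hy px py =>
            intro b
            have hyk : y ∈ lowerCentralSeries G k := hcl hy
            have hu : ⁅y, b⁆ ∈ lowerCentralSeries G (k + 1) :=
              Subgroup.commutator_mem_commutator hyk (Subgroup.mem_top b)
            have hcor : ⁅⁅y, b⁆⁻¹, x⁆ ∈ lowerCentralSeries G (k + 2) :=
              Subgroup.commutator_mem_commutator ((lowerCentralSeries G (k+1)).inv_mem hu)
                (Subgroup.mem_top x)
            have hid : ⁅x * y, b⁆ = ⁅y, b⁆ * ⁅⁅y, b⁆⁻¹, x⁆ * ⁅x, b⁆ := by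
              simp only [commutatorElement_def]; group
            rw [hid]
            exact M.mul_mem (M.mul_mem (py b) (hMsub hcor)) (px b)
        | inv x hx px =>
            intro b
            have hxk : x ∈ lowerCentralSeries G k := hcl hx
            have hu : ⁅x, b⁆ ∈ lowerCentralSeries G (k + 1) :=
              Subgroup.commutator_mem_commutator hxk (Subgroup.mem_top b)
            have hcor : ⁅⁅x, b⁆, x⁻¹⁆ ∈ lowerCentralSeries G (k + 2) :=
              Subgroup.commutator_mem_commutator hu (Subgroup.mem_top _)
            have hid : ⁅x⁻¹, b⁆ = ⁅x, b⁆⁻¹ * ⁅⁅x, b⁆, x⁻¹⁆ := by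
              simp only [commutatorElement_def]; group
            rw [hid]
            exact M.mul_mem (M.inv_mem (px b)) (hMsub hcor)
      show ⁅lowerCentralSeries G k, (⊤ : Subgroup G)⁆ ≤ M
      rw [Subgroup.commutator_le]
      intro a ha b _
      exact claimA a (ih ha) b

end Gen

/-! ### Dynamics -/

section Dyn

variable {G : Type*} [Group G]

/-- The conclusion: an invariant nonzero measure, finite on compacts. -/
def Concl (ρ : G → ℝ → ℝ) : Prop :=
  ∃ μ : Measure ℝ, μ ≠ 0 ∧ (∀ K : Set ℝ, IsCompact K → μ K < ⊤) ∧
    ∀ (g : G) (A : Set ℝ), MeasurableSet A → μ (ρ g ⁻¹' A) = μ A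

variable {ρ : G → ℝ → ℝ}

section Basic

variable (hmul : ∀ g h : G, ρ (g * h) = ρ g ∘ ρ h) (hone : ρ 1 = id)
  (hmono : ∀ g : G, StrictMono (ρ g)) (hsurj : ∀ g : G, Function.Surjective (ρ g))

include hmul hone in
theorem rho_inv_left (g : G) (x : ℝ) : ρ g⁻¹ (ρ g x) = x := by
  have h := hmul g⁻¹ g
  rw [inv_mul_cancel, hone] at h
  exact (congrFun h x).symm

include hmul hone in
theorem rho_inv_right (g : G) (x : ℝ) : ρ g (ρ g⁻¹ x) = x := by
  have h := hmul g g⁻¹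
  rw [mul_inv_cancel, hone] at h
  exact (congrFun h x).symm

include hmul in
theorem rho_apply_mul (g h : G) (x : ℝ) : ρ (g * h) x = ρ g (ρ h x) := by
  rw [hmul]; rfl

/-- The order isomorphism attached to `ρ g`. -/
noncomputable def rhoOI (g : G) : ℝ ≃o ℝ :=
  StrictMono.orderIsoOfSurjective (ρ g) (hmono g) (hsurj g)

theorem rhoOI_apply (g : G) (x : ℝ) : rhoOI hmono hsurj g x = ρ g x := rfl

include hmono hsurj in
theorem rho_continuous (g : G) : Continuous (ρ g) :=
  (OrderIso.toHomeomorph (rhoOI hmono hsurj g)).continuous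

include hmono in
theorem rho_lt_iff (g : G) {x y : ℝ} : ρ g x < ρ g y ↔ x < y := (hmono g).lt_iff_lt

include hmono in
theorem rho_le_iff (g : G) {x y : ℝ} : ρ g x ≤ ρ g y ↔ x ≤ y := (hmono g).le_iff_le

include hmul hone hmono in
theorem rho_preimage_Ioc (g : G) (a b : ℝ) :
    ρ g ⁻¹' Set.Ioc a b = Set.Ioc (ρ g⁻¹ a) (ρ g⁻¹ b) := by
  ext x
  simp only [Set.mem_preimage, Set.mem_Ioc]
  constructor
  · rintro ⟨h1, h2⟩
    constructor
    · have := (hmono g⁻¹).lt_iff_lt.mpr h1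
      rwa [rho_inv_left hmul hone] at this
    · have := (hmono g⁻¹).le_iff_le.mpr h2
      rwa [rho_inv_left hmul hone] at this
  · rintro ⟨h1, h2⟩
    constructor
    · have := (hmono g).lt_iff_lt.mpr h1
      rwa [rho_inv_right hmul hone] at this
    · have := (hmono g).le_iff_le.mpr h2
      rwa [rho_inv_right hmul hone] at this

include hmul hone hmono in
theorem rho_image_Ioi (g : G) (x : ℝ) : ρ g '' Set.Ioi x = Set.Ioi (ρ g x) := by
  ext y
  constructor
  · rintro ⟨z, hz, rfl⟩
    exact (hmono g).lt_iff_lt.mpr hz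
  · intro hy
    refine ⟨ρ g⁻¹ y, ?_, rho_inv_right hmul hone g y⟩
    have := (hmono g⁻¹).lt_iff_lt.mpr hy
    rwa [rho_inv_left hmul hone] at this

include hmono hsurj in
/-- Dirac measure at a global fixed point. -/
theorem concl_of_fixed_point {p : ℝ} (hp : ∀ g : G, ρ g p = p) : Concl ρ := by
  refine ⟨Measure.dirac p, ?_, ?_, ?_⟩
  · intro h
    have : (Measure.dirac p) Set.univ = 0 := by rw [h]; simp
    simp at this
  · intro K _
    calc (Measure.dirac p) K ≤ Measure.dirac p Set.univ := measure_mono (Set.subset_univ K)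
      _ = 1 := by simp
      _ < ⊤ := by norm_num
  · intro g A hA
    rw [Measure.dirac_apply' _ hA, Measure.dirac_apply' _ (hA.preimage (rho_continuous hmono hsurj g).measurable)]
    have : p ∈ ρ g ⁻¹' A ↔ p ∈ A := by
      simp only [Set.mem_preimage, hp g]
    by_cases hmem : p ∈ A
    · rw [Set.indicator_of_mem hmem, Set.indicator_of_mem (this.mpr hmem)]
    · rw [Set.indicator_of_notMem hmem, Set.indicator_of_notMem (fun hc => hmem (this.mp hc))]

include hmul hone hmono hsurj in
/-- If an invariant nonempty closed set is bounded above or below, there is a global fixed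
point. -/
theorem fixed_point_of_bdd {F : Set ℝ} (hne : F.Nonempty) (hcl : IsClosed F)
    (hinv : ∀ (g : G) (x : ℝ), x ∈ F → ρ g x ∈ F) (hbdd : BddAbove F ∨ BddBelow F) :
    ∃ p : ℝ, ∀ g : G, ρ g p = p := by
  have himg : ∀ g : G, ρ g '' F = F := by
    intro g
    apply Set.Subset.antisymm
    · rintro _ ⟨x, hx, rfl⟩; exact hinv g x hx
    · intro x hx
      exact ⟨ρ g⁻¹ x, hinv g⁻¹ x hx, rho_inv_right hmul hone g x⟩
  rcases hbdd with hbdd | hbdd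
  · refine ⟨sSup F, fun g => ?_⟩
    have := Monotone.map_csSup_of_continuousAt ((rho_continuous hmono hsurj g).continuousAt)
      (hmono g).monotone hne hbdd
    rw [this, himg g]
  · refine ⟨sInf F, fun g => ?_⟩
    have := Monotone.map_csInf_of_continuousAt ((rho_continuous hmono hsurj g).continuousAt)
      (hmono g).monotone hne hbdd
    rw [this, himg g]

include hmul hone hmono hsurj in
theorem fixed_of_tendsto {D : Set ℝ} (hDcl : IsClosed D) (h₀ : G) (u : ℕ → ℝ) (L : ℝ)
    (htend : Filter.Tendsto u Filter.atTop (nhds L)) (huD : ∀ n, u n ∈ D)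
    (hstep : ∀ n, u (n + 1) = ρ h₀ (u n)) : L ∈ D ∧ ρ h₀ L = L := by
  have hLD : L ∈ D := hDcl.mem_of_tendsto htend (Filter.Eventually.of_forall huD)
  refine ⟨hLD, ?_⟩
  have h1 : Filter.Tendsto (fun n => ρ h₀ (u n)) Filter.atTop (nhds (ρ h₀ L)) :=
    ((rho_continuous hmono hsurj h₀).continuousAt.tendsto).comp htend
  have h2 : Filter.Tendsto (fun n => u (n + 1)) Filter.atTop (nhds L) :=
    htend.comp (Filter.tendsto_add_atTop_nat 1)
  have h3 : (fun n => u (n + 1)) = fun n => ρ h₀ (u n) := funext hstep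
  rw [h3] at h2
  exact tendsto_nhds_unique h1 h2

include hmul hone hmono hsurj in
/-- Two points of an invariant set moving in opposite directions, with the rising one below
the falling one, force a fixed point in the set. -/
theorem no_cross_up {D : Set ℝ} (hDcl : IsClosed D)
    (hDinv : ∀ (g : G) (x : ℝ), x ∈ D → ρ g x ∈ D)
    (h₀ : G) (hT : ∀ x ∈ D, ρ h₀ x ≠ x) {x y : ℝ} (hxD : x ∈ D) (hyD : y ∈ D)
    (hxy : x < y) (hx' : x < ρ h₀ x) (hy' : ρ h₀ y < y) : False := by
  set u : ℕ → ℝ := fun n => ρ (h₀ ^ n) x with hu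
  have huD : ∀ n, u n ∈ D := fun n => hDinv _ x hxD
  have hstep : ∀ n, u (n + 1) = ρ h₀ (u n) := by
    intro n
    show ρ (h₀ ^ (n + 1)) x = ρ h₀ (ρ (h₀ ^ n) x)
    rw [pow_succ', rho_apply_mul hmul]
  have hlt : ∀ n, u n < y := by
    intro n
    induction n with
    | zero => simpa [hu, hone] using hxy
    | succ n ih =>
        rw [hstep n]
        calc ρ h₀ (u n) < ρ h₀ y := (hmono h₀) ih
          _ < y := hy'
  have hmonou : Monotone u := by
    have key : ∀ n, u n < u (n + 1) := by
      intro n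
      induction n with
      | zero =>
          rw [hstep 0]
          have h0 : u 0 = x := by simp [hu, hone]
          rw [h0]; exact hx'
      | succ n ih =>
          have e1 : u (n + 2) = ρ h₀ (u (n + 1)) := hstep (n + 1)
          have e2 : u (n + 1) = ρ h₀ (u n) := hstep n
          rw [e1]
          conv_lhs => rw [e2]
          exact (hmono h₀) ih
    exact monotone_nat_of_le_succ (fun n => (key n).le)
  have hbdd : BddAbove (Set.range u) := ⟨y, by rintro _ ⟨n, rfl⟩; exact (hlt n).le⟩
  have htend := tendsto_atTop_ciSup hmonou hbdd
  obtain ⟨hLD, hfix⟩ := fixed_of_tendsto hmul hone hmono hsurj hDcl h₀ u _ htend huD hstep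
  exact hT _ hLD hfix

include hmul hone hmono hsurj in
/-- Sign dichotomy for a fixed-point-free map on an invariant closed set. -/
theorem sign_dichotomy {D : Set ℝ} (hDcl : IsClosed D)
    (hDinv : ∀ (g : G) (x : ℝ), x ∈ D → ρ g x ∈ D)
    (h₀ : G) (hT : ∀ x ∈ D, ρ h₀ x ≠ x) :
    (∀ x ∈ D, x < ρ h₀ x) ∨ (∀ x ∈ D, ρ h₀ x < x) := by
  by_contra hcon
  push_neg at hcon
  obtain ⟨⟨y, hyD, hy⟩, ⟨x, hxD, hx⟩⟩ := hcon
  have hy' : ρ h₀ y < y := lt_of_le_of_ne hy (hT y hyD)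
  have hx' : x < ρ h₀ x := lt_of_le_of_ne hx (fun h => hT x hxD h.symm)
  rcases lt_trichotomy x y with hxy | hxy | hxy
  · exact no_cross_up hmul hone hmono hsurj hDcl hDinv h₀ hT hxD hyD hxy hx' hy'
  · rw [hxy] at hx'; exact absurd hx' (lt_asymm hy')
  · -- y < x : walk x down by the inverse orbit until it passes below y
    set w : ℕ → ℝ := fun n => ρ (h₀ ^ (-(n : ℤ))) x with hw
    have hwD : ∀ n, w n ∈ D := fun n => hDinv _ x hxD
    have hw0 : w 0 = x := by simp [hw, hone]
    have hwstep : ∀ n, w (n + 1) = ρ h₀⁻¹ (w n) := by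
      intro n
      show ρ (h₀ ^ (-((n:ℤ) + 1))) x = ρ h₀⁻¹ (ρ (h₀ ^ (-(n:ℤ))) x)
      rw [← rho_apply_mul hmul]
      congr 1
      rw [neg_add, ← zpow_neg_one, ← zpow_add]
      ring_nf
    have hwstep' : ∀ n, ρ h₀ (w (n + 1)) = w n := by
      intro n
      rw [hwstep n, rho_inv_right hmul hone]
    -- each w n rises under ρ h₀
    have hSign : ∀ n, w n < ρ h₀ (w n) := by
      intro n
      induction n with
      | zero => rw [hw0]; exact hx'
      | succ n ih =>
          rw [hwstep' n]
          -- goal : w (n+1) < w n ; from ih : w n < ρ h₀ (w n) i.e. applying ρ h₀⁻¹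
          have := (hmono h₀⁻¹) ih
          rw [rho_inv_left hmul hone] at this
          rwa [← hwstep n] at this
    -- w is strictly decreasing
    have hdec : ∀ n, w (n + 1) < w n := by
      intro n
      have := hSign (n + 1)
      rwa [hwstep' n] at this
    by_cases hbelow : ∃ n, w n ≤ y
    · obtain ⟨n, hn⟩ := hbelow
      rcases lt_or_eq_of_le hn with hn' | hn'
      · exact no_cross_up hmul hone hmono hsurj hDcl hDinv h₀ hT (hwD n) hyD hn' (hSign n) hy'
      · have h2 := hSign n
        rw [hn'] at h2
        exact absurd h2 (lt_asymm hy')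
    · push_neg at hbelow
      -- w decreasing bounded below by y : converges to a fixed point of ρ h₀⁻¹
      have hantiw : Antitone w := antitone_nat_of_succ_le (fun n => (hdec n).le)
      have hbddw : BddBelow (Set.range w) := ⟨y, by rintro _ ⟨n, rfl⟩; exact (hbelow n).le⟩
      have htend := tendsto_atTop_ciInf hantiw hbddw
      have hwstep'' : ∀ n, w (n + 1) = ρ h₀⁻¹ (w n) := hwstep
      obtain ⟨hLD, hfix⟩ := fixed_of_tendsto hmul hone hmono hsurj hDcl h₀⁻¹ w _ htend hwD hwstep''
      have : ρ h₀ (ρ h₀⁻¹ (⨅ i, w i)) = ρ h₀ (⨅ i, w i) := by rw [hfix]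
      rw [rho_inv_right hmul hone] at this
      exact hT _ hLD this.symm

include hmul hone hmono hsurj in
/-- The translation number homomorphism associated to a fixed-point-free central element. -/
theorem translation_hom (hbot : ∃ N, lowerCentralSeries G N = ⊥)
    {D : Set ℝ} (hDcl : IsClosed D)
    (hDinv : ∀ (g : G) (x : ℝ), x ∈ D → ρ g x ∈ D)
    (h₀ : G) (hTpos : ∀ x ∈ D, x < ρ h₀ x)
    (hTcomm : ∀ (g : G) (x : ℝ), x ∈ D → ρ h₀ (ρ g x) = ρ g (ρ h₀ x))
    {x₀ : ℝ} (hx₀ : x₀ ∈ D) :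
    ∃ τ : G → ℝ, (∀ x y : G, τ (x * y) = τ x + τ y) ∧ τ h₀ = 1 ∧
      ∀ x : ℝ, (τ '' {g : G | ρ g x₀ ≤ x}).Nonempty ∧ BddAbove (τ '' {g : G | ρ g x₀ ≤ x}) := by
  have hT : ∀ x ∈ D, ρ h₀ x ≠ x := fun x hx => (hTpos x hx).ne'
  -- the ℤ-orbit basics
  have hz_mul : ∀ (m k : ℤ) (z : ℝ), ρ (h₀ ^ (m + k)) z = ρ (h₀ ^ m) (ρ (h₀ ^ k) z) := by
    intro m k z
    rw [zpow_add, rho_apply_mul hmul]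
  have hz_succ : ∀ (m : ℤ) (z : ℝ), ρ (h₀ ^ (m + 1)) z = ρ h₀ (ρ (h₀ ^ m) z) := by
    intro m z
    rw [add_comm, hz_mul, zpow_one]
  have hzD : ∀ (m : ℤ) (z : ℝ), z ∈ D → ρ (h₀ ^ m) z ∈ D := fun m z hz => hDinv _ z hz
  have hzmono : ∀ z ∈ D, StrictMono (fun m : ℤ => ρ (h₀ ^ m) z) := by
    intro z hz
    apply strictMono_int_of_lt_succ
    intro m
    show ρ (h₀ ^ m) z < ρ (h₀ ^ (m + 1)) z
    rw [hz_succ]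
    exact hTpos _ (hzD m z hz)
  -- unboundedness above
  have hub : ∀ z ∈ D, ∀ y : ℝ, ∃ n : ℕ, y < ρ (h₀ ^ (n : ℤ)) z := by
    intro z hz y
    by_contra hcon
    push_neg at hcon
    set u : ℕ → ℝ := fun n => ρ (h₀ ^ (n : ℤ)) z with hu
    have huD : ∀ n, u n ∈ D := fun n => hzD _ z hz
    have hstep : ∀ n, u (n + 1) = ρ h₀ (u n) := by
      intro n
      show ρ (h₀ ^ ((n : ℕ) + 1 : ℤ)) z = ρ h₀ (ρ (h₀ ^ (n : ℤ)) z)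
      rw [hz_succ]
    have hmonou : Monotone u := by
      apply monotone_nat_of_le_succ
      intro n
      rw [hstep n]
      exact (hTpos _ (huD n)).le
    have hbdd : BddAbove (Set.range u) := ⟨y, by rintro _ ⟨n, rfl⟩; exact hcon n⟩
    have htend := tendsto_atTop_ciSup hmonou hbdd
    obtain ⟨hLD, hfix⟩ := fixed_of_tendsto hmul hone hmono hsurj hDcl h₀ u _ htend huD hstep
    exact hT _ hLD hfix
  -- unboundedness below
  have hlb : ∀ z ∈ D, ∀ y : ℝ, ∃ n : ℕ, ρ (h₀ ^ (-(n : ℤ))) z < y := by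
    intro z hz y
    by_contra hcon
    push_neg at hcon
    set u : ℕ → ℝ := fun n => ρ (h₀ ^ (-(n : ℤ))) z with hu
    have huD : ∀ n, u n ∈ D := fun n => hzD _ z hz
    have hstep : ∀ n, u (n + 1) = ρ h₀⁻¹ (u n) := by
      intro n
      show ρ (h₀ ^ (-((n : ℤ) + 1))) z = ρ h₀⁻¹ (ρ (h₀ ^ (-(n : ℤ))) z)
      rw [← rho_apply_mul hmul]
      congr 1
      rw [neg_add, ← zpow_neg_one, ← zpow_add]
      congr 1
      ring
    have hantiu : Antitone u := by
      apply antitone_nat_of_succ_le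
      intro n
      rw [hstep n]
      have h2 := hTpos _ (huD (n + 1))
      rw [hstep n] at h2
      have h3 := (hmono h₀) h2
      rw [rho_inv_right hmul hone] at h3
      have h4 := hTpos _ (huD n)
      -- ρ h₀⁻¹ (u n) < u n : from u n < ρ h₀ (u n) applying ρ h₀⁻¹
      have h5 := (hmono h₀⁻¹) h4
      rw [rho_inv_left hmul hone] at h5
      exact h5.le
    have hbdd : BddBelow (Set.range u) := ⟨y, by rintro _ ⟨n, rfl⟩; exact hcon n⟩
    have htend := tendsto_atTop_ciInf hantiu hbdd
    obtain ⟨hLD, hfix⟩ := fixed_of_tendsto hmul hone hmono hsurj hDcl h₀⁻¹ u _ htend huD hstep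
    have h6 : ρ h₀ (ρ h₀⁻¹ (⨅ i, u i)) = ρ h₀ (⨅ i, u i) := by rw [hfix]
    rw [rho_inv_right hmul hone] at h6
    exact hT _ hLD h6.symm
  -- greatest m with ρ (h₀ ^ m) x₀ ≤ ρ g x₀
  have hgreat : ∀ g : G, ∃ m : ℤ, (ρ (h₀ ^ m) x₀ ≤ ρ g x₀) ∧
      ∀ z : ℤ, ρ (h₀ ^ z) x₀ ≤ ρ g x₀ → z ≤ m := by
    intro g
    apply Int.exists_greatest_of_bdd
    · obtain ⟨N, hN⟩ := hub x₀ hx₀ (ρ g x₀)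
      refine ⟨N, fun z hz => ?_⟩
      by_contra hlt
      push_neg at hlt
      have h1 : ρ (h₀ ^ ((N : ℕ) : ℤ)) x₀ < ρ (h₀ ^ z) x₀ := (hzmono x₀ hx₀) hlt
      linarith
    · obtain ⟨n, hn⟩ := hlb x₀ hx₀ (ρ g x₀)
      exact ⟨-(n : ℤ), hn.le⟩
  choose a haP hamax using hgreat
  -- a g + 1 exceeds
  have haU : ∀ g : G, ρ g x₀ < ρ (h₀ ^ (a g + 1)) x₀ := by
    intro g
    by_contra hcon
    push_neg at hcon
    have := hamax g (a g + 1) hcon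
    omega
  -- commutation with the ℤ-orbit
  have hcommn : ∀ (g : G) (n : ℕ) (z : ℝ), z ∈ D → ρ g (ρ (h₀ ^ (n : ℤ)) z) = ρ (h₀ ^ (n : ℤ)) (ρ g z) := by
    intro g n
    induction n with
    | zero => intro z _; simp [hone]
    | succ n ih =>
        intro z hz
        have e1 : ((n + 1 : ℕ) : ℤ) = (n : ℤ) + 1 := by push_cast; ring
        rw [e1, hz_succ, hz_succ]
        rw [← hTcomm g _ (hzD _ z hz), ih z hz]
  have hcommz : ∀ (g : G) (m : ℤ) (z : ℝ), z ∈ D → ρ g (ρ (h₀ ^ m) z) = ρ (h₀ ^ m) (ρ g z) := by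
    intro g m z hz
    rcases Int.lt_or_le m 0 with hm | hm
    · obtain ⟨n, rfl⟩ : ∃ n : ℕ, m = -(n : ℤ) := ⟨m.natAbs, by omega⟩
      set w := ρ (h₀ ^ (-(n : ℤ))) z with hwdef
      have hwD : w ∈ D := hzD _ z hz
      have h1 : ρ (h₀ ^ (n : ℤ)) w = z := by
        rw [hwdef, ← hz_mul]
        simp [hone]
      have h2 := hcommn g n w hwD
      rw [h1] at h2
      -- h2 : ρ g z = ρ (h₀ ^ n) (ρ g w)
      have h3 : ρ (h₀ ^ (-(n:ℤ))) (ρ g z) = ρ (h₀ ^ (-(n:ℤ))) (ρ (h₀ ^ (n:ℤ)) (ρ g w)) := by rw [h2]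
      rw [← hz_mul] at h3
      simp only [neg_add_cancel] at h3
      rw [show ρ (h₀ ^ (0:ℤ)) (ρ g w) = ρ g w by simp [hone]] at h3
      exact h3.symm
    · obtain ⟨n, rfl⟩ : ∃ n : ℕ, m = (n : ℤ) := ⟨m.toNat, by omega⟩
      exact hcommn g n z hz
  -- superadditivity and subadditivity of a
  have hsuper : ∀ g h : G, a g + a h ≤ a (g * h) := by
    intro g h
    apply hamax
    have h1 : ρ (h₀ ^ (a g + a h)) x₀ = ρ (h₀ ^ (a h)) (ρ (h₀ ^ (a g)) x₀) := by
      rw [← hz_mul, add_comm]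
    rw [h1, rho_apply_mul hmul]
    calc ρ (h₀ ^ a h) (ρ (h₀ ^ a g) x₀) ≤ ρ (h₀ ^ a h) (ρ g x₀) := (hmono _).monotone (haP g)
      _ = ρ g (ρ (h₀ ^ a h) x₀) := (hcommz g (a h) x₀ hx₀).symm
      _ ≤ ρ g (ρ h x₀) := (hmono g).monotone (haP h)
  have hupper : ∀ g h : G, a (g * h) ≤ a g + a h + 1 := by
    intro g h
    have h1 : ρ (g * h) x₀ < ρ (h₀ ^ (a g + a h + 2)) x₀ := by
      have e1 : ρ (h₀ ^ (a g + a h + 2)) x₀ = ρ (h₀ ^ (a h + 1)) (ρ (h₀ ^ (a g + 1)) x₀) := by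
        rw [← hz_mul]; ring_nf
      rw [e1, rho_apply_mul hmul]
      calc ρ g (ρ h x₀) < ρ g (ρ (h₀ ^ (a h + 1)) x₀) := (hmono g) (haU h)
        _ = ρ (h₀ ^ (a h + 1)) (ρ g x₀) := hcommz g (a h + 1) x₀ hx₀
        _ < ρ (h₀ ^ (a h + 1)) (ρ (h₀ ^ (a g + 1)) x₀) := (hmono _) (haU g)
    have h2 := haP (g * h)
    have h3 : ρ (h₀ ^ (a (g * h))) x₀ < ρ (h₀ ^ (a g + a h + 2)) x₀ := lt_of_le_of_lt h2 h1
    have h4 := (hzmono x₀ hx₀).lt_iff_lt.mp h3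
    omega
  have haone : a 1 = 0 := by
    have h1 : (0 : ℤ) ≤ a 1 := by
      apply hamax
      simp [hone]
    have h2 : ρ (h₀ ^ (a 1)) x₀ ≤ ρ (h₀ ^ (0 : ℤ)) x₀ := by
      have := haP 1
      rw [hone] at this
      simpa [hone] using this
    have h3 : a 1 ≤ 0 := (hzmono x₀ hx₀).le_iff_le.mp h2
    omega
  have hapow : ∀ k : ℕ, a (h₀ ^ k) = (k : ℤ) := by
    intro k
    have hzn : ρ (h₀ ^ k) x₀ = ρ (h₀ ^ (k : ℤ)) x₀ := by rw [zpow_natCast]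
    have h1 : a (h₀ ^ k) ≤ (k : ℤ) := by
      apply (hzmono x₀ hx₀).le_iff_le.mp
      show ρ (h₀ ^ (a (h₀ ^ k))) x₀ ≤ ρ (h₀ ^ (k:ℤ)) x₀
      rw [← hzn]
      exact haP _
    have h2 : (k : ℤ) ≤ a (h₀ ^ k) := hamax _ _ (le_of_eq hzn.symm)
    omega
  -- growth bounds
  have hgrow : ∀ (g : G) (k : ℕ), a (g ^ k) ≤ (k : ℤ) * (a g + 1) := by
    intro g k
    induction k with
    | zero => simp [haone]
    | succ k ih =>
        have h1 : a (g ^ (k+1)) ≤ a (g ^ k) + a g + 1 := by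
          rw [pow_succ]; exact hupper _ _
        push_cast
        push_cast at ih
        linarith
  have hgrow2 : ∀ (g : G) (k : ℕ), (k : ℤ) * a g ≤ a (g ^ k) := by
    intro g k
    induction k with
    | zero => simp [haone]
    | succ k ih =>
        have h1 : a (g ^ k) + a g ≤ a (g ^ (k+1)) := by
          rw [pow_succ]; exact hsuper _ _
        push_cast
        push_cast at ih
        linarith
  -- Fekete
  have hsubadd : ∀ g : G, Subadditive (fun k : ℕ => -((a (g ^ k) : ℝ))) := by
    intro g m n
    have h1 := hsuper (g ^ m) (g ^ n)
    rw [← pow_add] at h1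
    have h2 : ((a (g^m) + a (g^n) : ℤ) : ℝ) ≤ ((a (g ^ (m+n)) : ℤ) : ℝ) := Int.cast_le.mpr h1
    push_cast at h2
    simp only
    linarith
  have hbddb : ∀ g : G, BddBelow (Set.range fun n : ℕ => (-((a (g ^ n) : ℝ))) / n) := by
    intro g
    refine ⟨min 0 (-((a g : ℝ) + 1)), ?_⟩
    rintro _ ⟨n, rfl⟩
    rcases Nat.eq_zero_or_pos n with rfl | hn
    · simp [haone]
    · have h1 := hgrow g n
      have h2 : ((a (g^n) : ℤ) : ℝ) ≤ ((n : ℤ) : ℝ) * ((a g : ℝ) + 1) := by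
        exact_mod_cast h1
      have hn' : (0 : ℝ) < n := by exact_mod_cast hn
      refine le_trans (min_le_right _ _) ?_
      rw [le_div_iff₀ hn']
      push_cast at h2 ⊢
      nlinarith
  set τ : G → ℝ := fun g => - Subadditive.lim (hsubadd g) with hτdef
  have htend : ∀ g : G, Filter.Tendsto (fun k : ℕ => ((a (g ^ k) : ℝ)) / k)
      Filter.atTop (nhds (τ g)) := by
    intro g
    have h1 := (hsubadd g).tendsto_lim (hbddb g)
    have h2 := h1.neg
    simp only [neg_div] at h2 ⊢
    convert h2 using 2 with k
    ring
  have hτ_lb : ∀ g : G, (a g : ℝ) ≤ τ g := by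
    intro g
    refine ge_of_tendsto (htend g) ?_
    rw [Filter.eventually_atTop]
    refine ⟨1, fun k hk => ?_⟩
    have hk' : (0 : ℝ) < k := by exact_mod_cast hk
    rw [le_div_iff₀ hk']
    have h5 : ((k : ℝ)) * ((a g : ℤ) : ℝ) ≤ ((a (g ^ k) : ℤ) : ℝ) := by exact_mod_cast hgrow2 g k
    push_cast at h5 ⊢
    linarith
  have hτ_ub : ∀ g : G, τ g ≤ (a g : ℝ) + 1 := by
    intro g
    refine le_of_tendsto (htend g) ?_
    rw [Filter.eventually_atTop]
    refine ⟨1, fun k hk => ?_⟩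
    have hk' : (0 : ℝ) < k := by exact_mod_cast hk
    rw [div_le_iff₀ hk']
    have h5 : ((a (g ^ k) : ℤ) : ℝ) ≤ ((k : ℝ)) * (((a g : ℤ) : ℝ) + 1) := by exact_mod_cast hgrow g k
    push_cast at h5 ⊢
    linarith
  have hτone : τ 1 = 0 := by
    have h1 := htend 1
    have h2 : (fun k : ℕ => ((a ((1:G) ^ k) : ℝ)) / k) = fun _ : ℕ => (0 : ℝ) := by
      funext k
      rw [one_pow, haone]
      simp
    rw [h2] at h1
    exact tendsto_nhds_unique h1 tendsto_const_nhds
  have hhomog : ∀ (g : G) (n : ℕ), τ (g ^ n) = n * τ g := by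
    intro g n
    rcases Nat.eq_zero_or_pos n with rfl | hn
    · simpa using hτone
    · have hmn : Filter.Tendsto (fun k : ℕ => n * k) Filter.atTop Filter.atTop :=
        Filter.tendsto_atTop_mono (fun k => Nat.le_mul_of_pos_left k hn) Filter.tendsto_id
      have hcomp : Filter.Tendsto (fun k : ℕ => ((a (g ^ (n * k)) : ℝ)) / (n * k : ℕ))
          Filter.atTop (nhds (τ g)) := (htend g).comp hmn
      have hmulc := hcomp.const_mul (n : ℝ)
      have heq : (fun k : ℕ => ((a ((g ^ n) ^ k) : ℝ)) / k)
          = fun k : ℕ => (n : ℝ) * (((a (g ^ (n * k)) : ℝ)) / (n * k : ℕ)) := by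
        funext k
        rw [← pow_mul]
        rcases Nat.eq_zero_or_pos k with rfl | hk
        · simp [haone]
        · have hnk : ((n * k : ℕ) : ℝ) = (n : ℝ) * k := by push_cast; ring
          rw [hnk]
          have hn0 : (n : ℝ) ≠ 0 := by positivity
          have hk0 : (k : ℝ) ≠ 0 := by
            have : (0:ℝ) < k := by exact_mod_cast hk
            linarith
          field_simp
      rw [← heq] at hmulc
      exact tendsto_nhds_unique (htend (g ^ n)) hmulc
  have hHQM : IsHQM τ 2 := by
    constructor
    · intro x y
      have h1 : ((a x : ℤ) : ℝ) + ((a y : ℤ) : ℝ) ≤ ((a (x * y) : ℤ) : ℝ) := by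
        exact_mod_cast hsuper x y
      have h2 : ((a (x * y) : ℤ) : ℝ) ≤ ((a x : ℤ) : ℝ) + ((a y : ℤ) : ℝ) + 1 := by
        exact_mod_cast hupper x y
      have l1 := hτ_lb x; have l2 := hτ_lb y; have l3 := hτ_lb (x*y)
      have u1 := hτ_ub x; have u2 := hτ_ub y; have u3 := hτ_ub (x*y)
      rw [abs_le]
      constructor <;> linarith
    · exact hhomog
  obtain ⟨N, hbotN⟩ := hbot
  have τadd : ∀ x y : G, τ (x * y) = τ x + τ y := IsHQM.additive N τ 2 hHQM hbotN
  have hτh₀ : τ h₀ = 1 := by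
    have h1 := htend h₀
    have h2 : Filter.Tendsto (fun k : ℕ => ((a (h₀ ^ k) : ℝ)) / k) Filter.atTop (nhds 1) := by
      apply Filter.Tendsto.congr' _ (tendsto_const_nhds (x := (1:ℝ)))
      rw [Filter.EventuallyEq, Filter.eventually_atTop]
      refine ⟨1, fun k hk => ?_⟩
      rw [hapow k]
      have hk' : (0 : ℝ) < k := by exact_mod_cast hk
      push_cast
      rw [div_self (ne_of_gt hk')]
    exact tendsto_nhds_unique h1 h2
  refine ⟨τ, τadd, hτh₀, ?_⟩
  intro x
  constructor
  · obtain ⟨n, hn⟩ := hlb x₀ hx₀ x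
    exact ⟨τ (h₀ ^ (-(n:ℤ))), ⟨h₀ ^ (-(n:ℤ)), hn.le, rfl⟩⟩
  · obtain ⟨N', hN'⟩ := hub x₀ hx₀ x
    refine ⟨(N' : ℝ) + 1, ?_⟩
    rintro _ ⟨g, hg, rfl⟩
    have h1 : ρ (h₀ ^ (a g)) x₀ < ρ (h₀ ^ (N' : ℤ)) x₀ := lt_of_le_of_lt ((haP g).trans hg) hN'
    have h2 : a g < (N' : ℤ) := (hzmono x₀ hx₀).lt_iff_lt.mp h1
    have h3 := hτ_ub g
    have h4 : (a g : ℝ) + 1 ≤ (N' : ℝ) + 1 := by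
      have : ((a g : ℤ) : ℝ) < ((N' : ℤ) : ℝ) := Int.cast_lt.mpr h2
      push_cast at this ⊢
      linarith
    linarith

include hmul hone hmono hsurj in
/-- Core construction: invariant measure from a fixed-point-free central element. -/
theorem core_pos (hbot : ∃ N, lowerCentralSeries G N = ⊥)
    {D : Set ℝ} (hDne : D.Nonempty) (hDcl : IsClosed D)
    (hDinv : ∀ (g : G) (x : ℝ), x ∈ D → ρ g x ∈ D)
    (h₀ : G) (hTpos : ∀ x ∈ D, x < ρ h₀ x)
    (hTcomm : ∀ (g : G) (x : ℝ), x ∈ D → ρ h₀ (ρ g x) = ρ g (ρ h₀ x)) : Concl ρ := by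
  obtain ⟨x₀, hx₀⟩ := hDne
  obtain ⟨τ, τadd, hτh₀, hSτ⟩ :=
    translation_hom hmul hone hmono hsurj hbot hDcl hDinv h₀ hTpos hTcomm hx₀
  set Sτ : ℝ → Set ℝ := fun x => τ '' {g : G | ρ g x₀ ≤ x} with hSτdef
  set φ : ℝ → ℝ := fun x => sSup (Sτ x) with hφdef
  have hφmono : Monotone φ := by
    intro x y hxy
    apply csSup_le_csSup (hSτ y).2 (hSτ x).1
    apply Set.image_mono
    intro g hg
    exact le_trans hg hxy
  -- equivariance of φ
  have hφequi : ∀ (f : G) (x : ℝ), φ (ρ f x) = τ f + φ x := by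
    intro f x
    have hSimg : Sτ (ρ f x) = (fun t => τ f + t) '' Sτ x := by
      ext t
      constructor
      · rintro ⟨g, hg, rfl⟩
        refine ⟨τ (f⁻¹ * g), ⟨f⁻¹ * g, ?_, rfl⟩, ?_⟩
        · show ρ (f⁻¹ * g) x₀ ≤ x
          rw [rho_apply_mul hmul]
          have h1 := (hmono f⁻¹).monotone hg
          rwa [rho_inv_left hmul hone] at h1
        · show τ f + τ (f⁻¹ * g) = τ g
          rw [← τadd, mul_inv_cancel_left]
      · rintro ⟨_, ⟨g, hg, rfl⟩, rfl⟩
        refine ⟨f * g, ?_, by simpa using τadd f g⟩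
        show ρ (f * g) x₀ ≤ ρ f x
        rw [rho_apply_mul hmul]
        exact (hmono f).monotone hg
    rw [hφdef]
    simp only
    rw [hSimg]
    have hmapsup := Monotone.map_csSup_of_continuousAt
      (f := fun t => τ f + t) (continuous_const.add continuous_id).continuousAt
      (fun u v huv => by simpa using huv) (hSτ x).1 (hSτ x).2
    rw [← hmapsup]
  -- the right-continuous regularization
  set ψ : StieltjesFunction ℝ := hφmono.stieltjesFunction with hψdef
  have hψ_eq : ∀ x, ψ x = Function.rightLim φ x := fun x => rfl
  have hψequi : ∀ (f : G) (x : ℝ), ψ (ρ f x) = τ f + ψ x := by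
    intro f x
    rw [hψ_eq, hψ_eq]
    have hmapn : Filter.map (ρ f) (nhdsWithin x (Set.Ioi x))
        = nhdsWithin (ρ f x) (Set.Ioi (ρ f x)) := by
      have he := (OrderIso.toHomeomorph (rhoOI hmono hsurj f)).isEmbedding.map_nhdsWithin_eq
        (Set.Ioi x) x
      have himg : (OrderIso.toHomeomorph (rhoOI hmono hsurj f)) '' Set.Ioi x
          = Set.Ioi (ρ f x) := rho_image_Ioi hmul hone hmono f x
      rw [himg] at he
      exact he
    have htendR : Filter.Tendsto φ (nhdsWithin (ρ f x) (Set.Ioi (ρ f x)))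
        (nhds (τ f + Function.rightLim φ x)) := by
      rw [← hmapn, Filter.tendsto_map'_iff]
      have hcomp : φ ∘ ρ f = fun z => τ f + φ z := funext (fun z => hφequi f z)
      rw [hcomp]
      exact (hφmono.tendsto_rightLim x).const_add (τ f)
    exact rightLim_eq_of_tendsto (h := IsGLB.nhdsWithin_neBot (isGLB_Ioi) (Set.nonempty_Ioi))
      htendR
  set μ : Measure ℝ := ψ.measure with hμdef
  have hIoc : ∀ a b : ℝ, μ (Set.Ioc a b) = ENNReal.ofReal (ψ b - ψ a) :=
    fun a b => ψ.measure_Ioc a b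
  have hinv : ∀ (g : G) (a b : ℝ), μ (ρ g ⁻¹' Set.Ioc a b) = μ (Set.Ioc a b) := by
    intro g a b
    rw [rho_preimage_Ioc hmul hone hmono g a b, hIoc, hIoc]
    have e1 : ψ (ρ g⁻¹ a) = τ g⁻¹ + ψ a := hψequi g⁻¹ a
    have e2 : ψ (ρ g⁻¹ b) = τ g⁻¹ + ψ b := hψequi g⁻¹ b
    rw [e1, e2]
    ring_nf
  refine ⟨μ, ?_, ?_, ?_⟩
  · -- nonzero
    intro h0
    have h1 : μ (Set.Ioc x₀ (ρ h₀ x₀)) = 1 := by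
      rw [hIoc, hψequi h₀ x₀, hτh₀]
      norm_num
    rw [h0] at h1
    simp at h1
  · -- finite on compacts
    intro K hK
    exact hK.measure_lt_top
  · -- invariance
    intro g A hA
    have hmeas : Measurable (ρ g) := (rho_continuous hmono hsurj g).measurable
    set ν := Measure.map (ρ g) μ with hνdef
    have hext : ν = μ := by
      refine Measure.ext_of_Ioc' ν μ (fun p q hpq => ?_) (fun p q hpq => ?_)
      · rw [hνdef, Measure.map_apply hmeas measurableSet_Ioc, hinv g p q, hIoc]
        exact ENNReal.ofReal_ne_top
      · rw [hνdef, Measure.map_apply hmeas measurableSet_Ioc, hinv g p q]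
    calc μ (ρ g ⁻¹' A) = ν A := (Measure.map_apply hmeas hA).symm
      _ = μ A := by rw [hext]

include hmul hone hmono hsurj in
/-- Core case: a fixed-point-free element of an invariant closed set, commuting with the action
on it, yields an invariant measure. -/
theorem core (hbot : ∃ N, lowerCentralSeries G N = ⊥)
    {D : Set ℝ} (hDne : D.Nonempty) (hDcl : IsClosed D)
    (hDinv : ∀ (g : G) (x : ℝ), x ∈ D → ρ g x ∈ D)
    (h₀ : G) (hT : ∀ x ∈ D, ρ h₀ x ≠ x)
    (hTcomm : ∀ (g : G) (x : ℝ), x ∈ D → ρ h₀ (ρ g x) = ρ g (ρ h₀ x)) : Concl ρ := by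
  rcases sign_dichotomy hmul hone hmono hsurj hDcl hDinv h₀ hT with hpos | hneg
  · exact core_pos hmul hone hmono hsurj hbot hDne hDcl hDinv h₀ hpos hTcomm
  · apply core_pos hmul hone hmono hsurj hbot hDne hDcl hDinv h₀⁻¹ ?_ ?_
    · intro x hx
      have h1 := hneg x hx
      have h2 := (hmono h₀⁻¹) h1
      rwa [rho_inv_left hmul hone] at h2
    · intro g x hx
      -- ρ h₀⁻¹ (ρ g x) = ρ g (ρ h₀⁻¹ x)
      have h1 := hTcomm g (ρ h₀⁻¹ x) (hDinv h₀⁻¹ x hx)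
      rw [rho_inv_right hmul hone] at h1
      -- h1 : ρ h₀ (ρ g (ρ h₀⁻¹ x)) = ρ g x
      have h2 : ρ h₀⁻¹ (ρ h₀ (ρ g (ρ h₀⁻¹ x))) = ρ h₀⁻¹ (ρ g x) := by rw [h1]
      rw [rho_inv_left hmul hone] at h2
      exact h2.symm

include hmul hone in
theorem comm_on_D {D : Set ℝ} {n : ℕ}
    (hfix : ∀ h ∈ lowerCentralSeries G (n + 1), ∀ x ∈ D, ρ h x = x) :
    ∀ h ∈ lowerCentralSeries G n, ∀ (g : G), ∀ x ∈ D, ρ h (ρ g x) = ρ g (ρ h x) := by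
  intro h hh g x hx
  have hc : ⁅h⁻¹, g⁻¹⁆ ∈ lowerCentralSeries G (n + 1) :=
    Subgroup.commutator_mem_commutator ((lowerCentralSeries G n).inv_mem hh) (Subgroup.mem_top g⁻¹)
  have hkey : h * g = (g * h) * ⁅h⁻¹, g⁻¹⁆ := by
    rw [commutatorElement_def]; group
  calc ρ h (ρ g x) = ρ (h * g) x := (rho_apply_mul hmul h g x).symm
    _ = ρ ((g * h) * ⁅h⁻¹, g⁻¹⁆) x := by rw [← hkey]
    _ = ρ (g * h) (ρ (⁅h⁻¹, g⁻¹⁆) x) := rho_apply_mul hmul _ _ x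
    _ = ρ (g * h) x := by rw [hfix _ hc x hx]
    _ = ρ g (ρ h x) := rho_apply_mul hmul g h x

include hmul hone hmono hsurj in
theorem aux_list (hbot : ∃ N, lowerCentralSeries G N = ⊥) {n : ℕ} {D : Set ℝ}
    (hfix : ∀ h ∈ lowerCentralSeries G (n + 1), ∀ x ∈ D, ρ h x = x) :
    ∀ (l : List G), (∀ e ∈ l, e ∈ lowerCentralSeries G n) →
    ∀ (D' : Set ℝ), D'.Nonempty → IsClosed D' → (∀ (g : G) (x : ℝ), x ∈ D' → ρ g x ∈ D') →
      D' ⊆ D →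
    Concl ρ ∨ ∃ D'' : Set ℝ, D''.Nonempty ∧ IsClosed D'' ∧
      (∀ (g : G) (x : ℝ), x ∈ D'' → ρ g x ∈ D'') ∧ D'' ⊆ D' ∧
      ∀ e ∈ l, ∀ x ∈ D'', ρ e x = x := by
  intro l
  induction l with
  | nil =>
      intro _ D' hne hcl hinv hsub
      exact Or.inr ⟨D', hne, hcl, hinv, subset_rfl, by simp⟩
  | cons e l ih =>
      intro hmem D' hne hcl hinv hsub
      have hmeml : ∀ e' ∈ l, e' ∈ lowerCentralSeries G n := fun e' he' =>
        hmem e' (List.mem_cons_of_mem e he')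
      have hememn : e ∈ lowerCentralSeries G n := hmem e List.mem_cons_self
      rcases ih hmeml D' hne hcl hinv hsub with hC | ⟨D'', hne'', hcl'', hinv'', hsub'', hfixl⟩
      · exact Or.inl hC
      · set F' := D'' ∩ {x : ℝ | ρ e x = x} with hF'def
        have hF'cl : IsClosed F' :=
          IsClosed.inter hcl'' (isClosed_eq (rho_continuous hmono hsurj e) continuous_id)
        by_cases hF'ne : F'.Nonempty
        · refine Or.inr ⟨F', hF'ne, hF'cl, ?_, fun x hx => hsub'' hx.1, ?_⟩
          · intro g x hx
            refine ⟨hinv'' g x hx.1, ?_⟩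
            show ρ e (ρ g x) = ρ g x
            have hxD : x ∈ D := hsub (hsub'' hx.1)
            rw [comm_on_D hmul hone hfix e hememn g x hxD, hx.2]
          · intro e' he' x hx
            rcases List.mem_cons.mp he' with rfl | he''
            · exact hx.2
            · exact hfixl e' he'' x hx.1
        · -- e has no fixed point on D'' : core case
          left
          have hT : ∀ x ∈ D'', ρ e x ≠ x := by
            intro x hx hfx
            exact hF'ne ⟨x, hx, hfx⟩
          refine core hmul hone hmono hsurj hbot hne'' hcl'' hinv'' e hT ?_
          intro g x hx
          exact comm_on_D hmul hone hfix e hememn g x (hsub (hsub'' hx))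

include hmul hone hmono hsurj in
theorem main_ind (hbot : ∃ N, lowerCentralSeries G N = ⊥)
    {S : Set G} (hSfin : S.Finite) (hSgen : Subgroup.closure S = ⊤) :
    ∀ (n : ℕ) (D : Set ℝ), D.Nonempty → IsClosed D →
      (∀ (g : G) (x : ℝ), x ∈ D → ρ g x ∈ D) →
      (∀ h ∈ lowerCentralSeries G n, ∀ x ∈ D, ρ h x = x) → Concl ρ := by
  intro n
  induction n with
  | zero =>
      intro D hne _ _ hfix
      obtain ⟨p, hp⟩ := hne
      exact concl_of_fixed_point hmono hsurj
        (fun g => hfix g (by rw [lowerCentralSeries_zero]; exact Subgroup.mem_top g) p hp)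
  | succ n ih =>
      intro D hne hcl hinv hfix
      have hCfin : (commSet S n).Finite := commSet_finite hSfin n
      set l := hCfin.toFinset.toList with hldef
      have hlmem : ∀ e ∈ l, e ∈ commSet S n := by
        intro e he
        rw [hldef, Finset.mem_toList] at he
        exact hCfin.mem_toFinset.mp he
      have hlall : ∀ e ∈ commSet S n, e ∈ l := by
        intro e he
        rw [hldef, Finset.mem_toList]
        exact hCfin.mem_toFinset.mpr he
      have hlsub : ∀ e ∈ l, e ∈ lowerCentralSeries G n := fun e he =>
        commSet_subset_lcs n (hlmem e he)
      rcases aux_list hmul hone hmono hsurj hbot hfix l hlsub D hne hcl hinv subset_rfl with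
        hC | ⟨F, hFne, hFcl, hFinv, hFsub, hFfix⟩
      · exact hC
      · -- γ_n fixes F pointwise
        have hfixcl : ∀ h ∈ Subgroup.closure (commSet S n ∪ (lowerCentralSeries G (n+1) : Set G)),
            ∀ x ∈ F, ρ h x = x := by
          intro h hh'
          induction hh' using Subgroup.closure_induction with
          | mem y hy =>
              rcases hy with hy | hy
              · exact fun x hx => hFfix y (hlall y hy) x hx
              · exact fun x hx => hfix y hy x (hFsub hx)
          | one => intro x hx; rw [hone]; rfl
          | mul y z hy hz py pz =>
              intro x hx
              rw [rho_apply_mul hmul, pz x hx, py x hx]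
          | inv y hy py =>
              intro x hx
              have h1 := py x hx
              have h2 : ρ y⁻¹ (ρ y x) = ρ y⁻¹ x := by rw [h1]
              rw [rho_inv_left hmul hone] at h2
              exact h2.symm
        have hfixn : ∀ h ∈ lowerCentralSeries G n, ∀ x ∈ F, ρ h x = x := fun h hh =>
          hfixcl h (lcs_le_closure_commSet hSgen n hh)
        exact ih F hFne hFcl hFinv hfixn

end Basic

end Dyn

end PlanteAux

open PlanteAux in
/-- Every finitely generated nilpotent group of orientation-preserving
homeomorphisms of `ℝ` preserves a nonzero Borel measure on `ℝ` which is finite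
on compact sets.  The group is encoded as an abstract finitely generated
nilpotent group `G` with a faithful action `ρ` on `ℝ` by orientation-preserving
(i.e. strictly increasing) homeomorphisms. -/
theorem nilpotent_homeos_R_have_invariant_measure
    {G : Type*} [Group G] [Group.FG G] [Group.IsNilpotent G]
    (ρ : G → ℝ → ℝ)
    (hmul : ∀ g h : G, ρ (g * h) = ρ g ∘ ρ h)
    (hone : ρ 1 = id)
    (hhomeo : ∀ g : G, StrictMono (ρ g) ∧ Function.Surjective (ρ g))
    (hfaithful : ∀ g : G, ρ g = id → g = 1) :
    ∃ μ : Measure ℝ, μ ≠ 0 ∧ (∀ K : Set ℝ, IsCompact K → μ K < ⊤) ∧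
      ∀ g : G, ∀ A : Set ℝ, MeasurableSet A → μ (ρ g ⁻¹' A) = μ A := by
  have hmono : ∀ g : G, StrictMono (ρ g) := fun g => (hhomeo g).1
  have hsurj : ∀ g : G, Function.Surjective (ρ g) := fun g => (hhomeo g).2
  have hbot : ∃ N, lowerCentralSeries G N = ⊥ :=
    PlanteAux.nilpotent_iff_lowerCentralSeries.mp ‹Group.IsNilpotent G›
  obtain ⟨S, hSgen, hSfin⟩ := Group.fg_iff.mp ‹Group.FG G›
  obtain ⟨N, hN⟩ := hbot
  have hconcl : Concl ρ := by
    apply main_ind hmul hone hmono hsurj ⟨N, hN⟩ hSfin hSgen N Set.univ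
      ⟨0, trivial⟩ isClosed_univ (fun _ _ _ => trivial)
    intro h hh x _
    rw [hN] at hh
    have h1 : h = 1 := Subgroup.mem_bot.mp hh
    rw [h1, hone]
    rfl
  exact hconcl
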